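/- arXiv:2401.06138 — 3 statements merged into one kernel-verified Lean document; each statement's English description precedes it below -/
import Mathlib

section
/- Let A be an infinite-dimensional unital simple C*-algebra and let b ∈ A be a nonzero positive element. Then there exist positive elements b₁, b₂ ∈ A of norm one such that b₁b₂ = 0, b₁ is Cuntz equivalent to b₂, and b₁ + b₂ is Cuntz subequivalent to b. -/
/-- `a` is Cuntz subequivalent to `b` in the C*-algebra `A`: there is a sequence
`(rₙ)` in `A` with `‖rₙ * b * rₙ* - a‖ → 0`. -/
def CuntzSubeq {A : Type*} [NonUnitalCStarAlgebra A] (a b : A) : Prop :=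
  ∃ r : ℕ → A,
    Filter.Tendsto (fun n => ‖r n * b * star (r n) - a‖) Filter.atTop (nhds 0)

/-- A C*-algebra is simple if it has no closed two-sided ideals other than
`⊥` and `⊤`. -/
def IsSimpleCStarAlgebra (A : Type*) [NonUnitalCStarAlgebra A] : Prop :=
  ∀ I : TwoSidedIdeal A, IsClosed (I : Set A) → I = ⊥ ∨ I = ⊤

section Aux
variable {A : Type*} [CStarAlgebra A] [PartialOrder A] [StarOrderedRing A]

lemma sa_cfc (f : ℝ → ℝ) (c : A) : star (cfc f c) = cfc f c := by
  rw [← cfc_star]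
  simp

lemma core (c : A) (hc : 0 ≤ c) (ε : ℝ) (hε : 0 < ε) :
    ∃ s d : A, star s = s ∧ star d = d ∧ d * c * d = 1 - s * s ∧ ‖s * c * s‖ ≤ ε := by
  have hsa : IsSelfAdjoint c := .of_nonneg hc
  have hspec : ∀ t ∈ spectrum ℝ c, (0:ℝ) ≤ t := fun t ht => spectrum_nonneg_of_nonneg hc ht
  set g : ℝ → ℝ := fun t => Real.sqrt (ε / (t + ε)) with hg
  set dd : ℝ → ℝ := fun t => (Real.sqrt (t + ε))⁻¹ with hdd
  have hpos : ∀ t ∈ spectrum ℝ c, 0 < t + ε := fun t ht => by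
    have := hspec t ht; linarith
  have hgcont : ContinuousOn g (spectrum ℝ c) := by
    apply Real.continuous_sqrt.comp_continuousOn
    exact continuousOn_const.div (by fun_prop) (fun t ht => (hpos t ht).ne')
  have hdcont : ContinuousOn dd (spectrum ℝ c) := by
    apply ContinuousOn.inv₀
    · exact Real.continuous_sqrt.comp_continuousOn (by fun_prop)
    · exact fun t ht => (Real.sqrt_pos.mpr (hpos t ht)).ne'
  refine ⟨cfc g c, cfc dd c, sa_cfc g c, sa_cfc dd c, ?_, ?_⟩
  · have h1 : cfc dd c * c * cfc dd c = cfc (fun t => dd t * t * dd t) c := by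
      rw [cfc_mul (fun t => dd t * t) dd c (hdcont.mul continuousOn_id) hdcont,
        cfc_mul _ _ c hdcont (by fun_prop : ContinuousOn (fun t : ℝ => t) _), cfc_id' ℝ c hsa]
    have h2 : cfc g c * cfc g c = cfc (fun t => g t * g t) c := by
      rw [← cfc_mul _ _ c hgcont hgcont]
    rw [h1, h2, ← cfc_one (R := ℝ) c hsa, ← cfc_sub (1 : ℝ → ℝ) (fun t => g t * g t) c (by fun_prop) (hgcont.mul hgcont)]
    apply cfc_congr
    intro t ht
    have h3 := hpos t ht
    have h4 : Real.sqrt (t + ε) ≠ 0 := (Real.sqrt_pos.mpr h3).ne'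
    have h5 : dd t * t * dd t = t / (t + ε) := by
      rw [hdd]
      rw [div_eq_mul_inv, ← Real.mul_self_sqrt h3.le]
      field_simp
    have h6 : g t * g t = ε / (t + ε) := Real.mul_self_sqrt (by positivity)
    simp only [h5, h6, Pi.one_apply]
    field_simp
    ring
  · have h1 : cfc g c * c * cfc g c = cfc (fun t => g t * t * g t) c := by
      rw [cfc_mul (fun t => g t * t) g c (hgcont.mul continuousOn_id) hgcont,
        cfc_mul _ _ c hgcont (by fun_prop : ContinuousOn (fun t : ℝ => t) _), cfc_id' ℝ c hsa]
    rw [h1]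
    apply norm_cfc_le hε.le
    intro t ht
    have h3 := hpos t ht
    have h6 : g t * t * g t = t * (ε / (t + ε)) := by
      rw [hg]
      rw [mul_comm (Real.sqrt _) t, mul_assoc, Real.mul_self_sqrt (by positivity)]
    have ht0 := hspec t ht
    rw [h6, Real.norm_eq_abs, abs_of_nonneg (mul_nonneg ht0 (div_nonneg hε.le h3.le)),
      ← mul_div_assoc, div_le_iff₀ h3]
    nlinarith
end Aux

section Aux2
variable {A : Type*} [CStarAlgebra A] [PartialOrder A] [StarOrderedRing A]

lemma rsmul_nonneg {r : ℝ} (hr : 0 ≤ r) {a : A} (ha : 0 ≤ a) : 0 ≤ r • a := by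
  have hs : star (CFC.sqrt a) = CFC.sqrt a := (IsSelfAdjoint.of_nonneg (CFC.sqrt_nonneg _))
  have h1 : r • a = star (Real.sqrt r • CFC.sqrt a) * (Real.sqrt r • CFC.sqrt a) := by
    rw [star_smul, star_trivial, hs, smul_mul_assoc, mul_smul_comm, smul_smul,
      Real.mul_self_sqrt hr, CFC.sqrt_mul_sqrt_self a ha]
  rw [h1]
  exact star_mul_self_nonneg _

lemma rsmul_mono_scalar {r s : ℝ} (hrs : r ≤ s) {a : A} (ha : 0 ≤ a) : r • a ≤ s • a := by
  have := rsmul_nonneg (sub_nonneg.mpr hrs) ha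
  rw [sub_smul] at this
  exact sub_nonneg.mp this

lemma rsmul_mono_right {r : ℝ} (hr : 0 ≤ r) {a b : A} (h : a ≤ b) : r • a ≤ r • b := by
  have := rsmul_nonneg hr (sub_nonneg.mpr h)
  rw [smul_sub] at this
  exact sub_nonneg.mp this

lemma cuntz_smul_both {a b : A} (c : ℝ) (h : CuntzSubeq a b) : CuntzSubeq (c • a) (c • b) := by
  obtain ⟨r, hr⟩ := h
  refine ⟨r, ?_⟩
  have he : ∀ n, ‖r n * (c • b) * star (r n) - c • a‖ = |c| * ‖r n * b * star (r n) - a‖ := by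
    intro n
    rw [mul_smul_comm, smul_mul_assoc, ← smul_sub, norm_smul, Real.norm_eq_abs]
  simp only [he]
  simpa using hr.const_mul |c|

lemma cuntz_smul_left {a b : A} {c : ℝ} (hc : 0 ≤ c) (h : CuntzSubeq a b) :
    CuntzSubeq (c • a) b := by
  obtain ⟨r, hr⟩ := h
  refine ⟨fun n => Real.sqrt c • r n, ?_⟩
  have he : ∀ n, (Real.sqrt c • r n) * b * star (Real.sqrt c • r n) - c • a
      = c • (r n * b * star (r n) - a) := by
    intro n
    rw [star_smul, star_trivial, smul_mul_assoc, smul_mul_assoc, mul_smul_comm, smul_smul,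
      Real.mul_self_sqrt hc, smul_sub]
  have he2 : ∀ n, ‖(Real.sqrt c • r n) * b * star (Real.sqrt c • r n) - c • a‖
      = |c| * ‖r n * b * star (r n) - a‖ := by
    intro n; rw [he n, norm_smul, Real.norm_eq_abs]
  simp only [he2]
  simpa using hr.const_mul |c|

lemma cuntz_of_le {a b : A} (ha : 0 ≤ a) (hab : a ≤ b) : CuntzSubeq a b := by
  have hb : 0 ≤ b := ha.trans hab
  have key : ∀ n : ℕ, ∃ r : A, ‖r * b * star r - a‖ ≤ 1 / (n + 1) := by
    intro n
    obtain ⟨s, d, hs, hd, hdcd, hnorm⟩ := core b hb (1 / (n + 1)) (by positivity)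
    refine ⟨CFC.sqrt a * d, ?_⟩
    have hsq : CFC.sqrt a * CFC.sqrt a = a := CFC.sqrt_mul_sqrt_self a ha
    have hsqsa : star (CFC.sqrt a) = CFC.sqrt a := (IsSelfAdjoint.of_nonneg (CFC.sqrt_nonneg _))
    have hdiff : CFC.sqrt a * d * b * star (CFC.sqrt a * d) - a
        = -((CFC.sqrt a * s) * star (CFC.sqrt a * s)) := by
      rw [star_mul, hsqsa, hd, star_mul, hsqsa, hs]
      have : CFC.sqrt a * d * b * (d * CFC.sqrt a) = CFC.sqrt a * (d * b * d) * CFC.sqrt a := by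
        noncomm_ring
      rw [this, hdcd, mul_sub, sub_mul, mul_one, hsq]
      noncomm_ring
    rw [hdiff, norm_neg, CStarRing.norm_self_mul_star]
    have h2 : ‖CFC.sqrt a * s‖ * ‖CFC.sqrt a * s‖ = ‖s * a * s‖ := by
      rw [← CStarRing.norm_star_mul_self, star_mul, hsqsa, hs, mul_assoc,
        ← mul_assoc (CFC.sqrt a), hsq, ← mul_assoc]
    rw [h2]
    have h3 : s * a * s ≤ s * b * s := by
      have := star_left_conjugate_le_conjugate hab s
      rwa [hs] at this
    have h4 : (0:A) ≤ s * a * s := by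
      have := star_left_conjugate_nonneg ha s
      rwa [hs] at this
    exact (CStarAlgebra.norm_le_norm_of_nonneg_of_le h4 h3).trans hnorm
  choose r hr using key
  refine ⟨r, ?_⟩
  exact squeeze_zero (fun n => norm_nonneg _) hr tendsto_one_div_add_atTop_nhds_zero_nat

lemma cuntz_mul_star (x : A) : CuntzSubeq (x * star x) (star x * x) := by
  have hc : (0:A) ≤ star x * x := star_mul_self_nonneg x
  have key : ∀ n : ℕ, ∃ r : A, ‖r * (star x * x) * star r - x * star x‖ ≤ 1 / (n + 1) := by
    intro n
    obtain ⟨s, d, hs, hd, hdcd, hnorm⟩ := core (star x * x) hc (1 / (n + 1)) (by positivity)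
    refine ⟨x * d, ?_⟩
    have hdiff : x * d * (star x * x) * star (x * d) - x * star x
        = -((x * s) * star (x * s)) := by
      rw [star_mul, hd, star_mul, hs]
      have e1 : x * d * (star x * x) * (d * star x) = x * (d * (star x * x) * d) * star x := by
        noncomm_ring
      rw [e1, hdcd, mul_sub, sub_mul, mul_one]
      noncomm_ring
    rw [hdiff, norm_neg, CStarRing.norm_self_mul_star]
    have h2 : ‖x * s‖ * ‖x * s‖ = ‖s * (star x * x) * s‖ := by
      rw [← CStarRing.norm_star_mul_self, star_mul, hs]
      congr 1
      noncomm_ring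
    rw [h2]
    exact hnorm
  choose r hr using key
  exact ⟨r, squeeze_zero (fun n => norm_nonneg _) hr tendsto_one_div_add_atTop_nhds_zero_nat⟩
end Aux2

section Aux3
variable {A : Type*} [CStarAlgebra A] [PartialOrder A] [StarOrderedRing A]

lemma exists_orth_pair [Nontrivial A] {a : A} (ha : 0 ≤ a) {t₁ t₂ : ℝ}
    (h1 : t₁ ∈ spectrum ℝ a) (h2 : t₂ ∈ spectrum ℝ a) (ht1 : 0 < t₁) (hlt : t₁ < t₂) :
    ∃ f h : A, 0 ≤ f ∧ 0 ≤ h ∧ f ≠ 0 ∧ h ≠ 0 ∧ f * h = 0 ∧ f + h ≤ a := by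
  have hsa : IsSelfAdjoint a := .of_nonneg ha
  set δ : ℝ := min (t₁ / 2) ((t₂ - t₁) / 2) with hδ
  have hδ0 : 0 < δ := lt_min (by linarith) (by linarith)
  have hδ1 : 2 * δ ≤ t₁ := by
    have := min_le_left (t₁ / 2) ((t₂ - t₁) / 2); rw [← hδ] at this; linarith
  have hδ2 : 2 * δ ≤ t₂ - t₁ := by
    have := min_le_right (t₁ / 2) ((t₂ - t₁) / 2); rw [← hδ] at this; linarith
  set g₁ : ℝ → ℝ := fun t => max 0 (δ - |t - t₁|) with hg₁
  set g₂ : ℝ → ℝ := fun t => max 0 (δ - |t - t₂|) with hg₂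
  have hc1 : Continuous g₁ := by fun_prop
  have hc2 : Continuous g₂ := by fun_prop
  have hnn1 : ∀ t, 0 ≤ g₁ t := fun t => le_max_left 0 _
  have hnn2 : ∀ t, 0 ≤ g₂ t := fun t => le_max_left 0 _
  have hb1 : ∀ t, g₁ t ≤ δ := fun t => max_le hδ0.le (by have := abs_nonneg (t - t₁); linarith)
  have hb2 : ∀ t, g₂ t ≤ δ := fun t => max_le hδ0.le (by have := abs_nonneg (t - t₂); linarith)
  have hdisj : ∀ t, g₁ t = 0 ∨ g₂ t = 0 := by
    intro t
    by_cases hx : |t - t₁| < δ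
    · right
      apply max_eq_left
      have htri : |t₁ - t₂| ≤ |t - t₁| + |t - t₂| := by
        calc |t₁ - t₂| = |(t₁ - t) + (t - t₂)| := by ring_nf
          _ ≤ |t₁ - t| + |t - t₂| := abs_add_le _ _
          _ = |t - t₁| + |t - t₂| := by rw [abs_sub_comm t₁ t]
      have habs : |t₁ - t₂| = t₂ - t₁ := by rw [abs_sub_comm t₁ t₂]; exact abs_of_nonneg (by linarith)
      linarith
    · left
      apply max_eq_left
      push_neg at hx
      linarith
  have hpos_t : ∀ t, (0 < g₁ t ∨ 0 < g₂ t) → δ ≤ t := by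
    intro t hp
    rcases hp with hp | hp
    · have : δ - |t - t₁| > 0 := by
        by_contra hcon; push_neg at hcon
        rw [hg₁] at hp; simp only [max_eq_left hcon] at hp; exact lt_irrefl 0 hp
      have := abs_lt.mp (show |t - t₁| < δ by linarith)
      linarith
    · have : δ - |t - t₂| > 0 := by
        by_contra hcon; push_neg at hcon
        rw [hg₂] at hp; simp only [max_eq_left hcon] at hp; exact lt_irrefl 0 hp
      have := abs_lt.mp (show |t - t₂| < δ by linarith)
      linarith
  refine ⟨cfc g₁ a, cfc g₂ a, cfc_nonneg (fun t _ => hnn1 t), cfc_nonneg (fun t _ => hnn2 t),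
    ?_, ?_, ?_, ?_⟩
  · intro hzero
    have hle := norm_apply_le_norm_cfc g₁ a h1 hc1.continuousOn hsa
    rw [hzero, norm_zero] at hle
    have : g₁ t₁ = δ := by rw [hg₁]; simp [hδ0.le]
    rw [Real.norm_eq_abs, this, abs_of_nonneg hδ0.le] at hle
    linarith
  · intro hzero
    have hle := norm_apply_le_norm_cfc g₂ a h2 hc2.continuousOn hsa
    rw [hzero, norm_zero] at hle
    have : g₂ t₂ = δ := by rw [hg₂]; simp [hδ0.le]
    rw [Real.norm_eq_abs, this, abs_of_nonneg hδ0.le] at hle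
    linarith
  · rw [← cfc_mul _ _ a hc1.continuousOn hc2.continuousOn]
    have : cfc (fun t => g₁ t * g₂ t) a = cfc (fun _ : ℝ => (0:ℝ)) a :=
      cfc_congr fun t _ => by rcases hdisj t with h | h <;> simp [h]
    rw [this, cfc_const_zero]
  · rw [← cfc_add (a := a) g₁ g₂ hc1.continuousOn hc2.continuousOn]
    calc cfc (fun t => g₁ t + g₂ t) a ≤ cfc (fun t : ℝ => t) a := by
          refine cfc_mono (hf := (hc1.add hc2).continuousOn)
            (hg := continuous_id.continuousOn) ?_
          intro t ht
          have ht0 : 0 ≤ t := spectrum_nonneg_of_nonneg ha ht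
          rcases hdisj t with h | h
          · rw [h, zero_add]
            rcases eq_or_lt_of_le (hnn2 t) with h2' | h2'
            · rw [← h2']; exact ht0
            · exact (hb2 t).trans (hpos_t t (Or.inr h2'))
          · rw [h, add_zero]
            rcases eq_or_lt_of_le (hnn1 t) with h2' | h2'
            · rw [← h2']; exact ht0
            · exact (hb1 t).trans (hpos_t t (Or.inl h2'))
      _ = a := cfc_id' ℝ a hsa

lemma sq_eq_smul_of_two_point_spectrum {a : A} (ha : 0 ≤ a) {μ : ℝ}
    (hspec : spectrum ℝ a ⊆ {0, μ}) : a * a = μ • a := by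
  have hsa : IsSelfAdjoint a := .of_nonneg ha
  have h1 : a * a = cfc (fun t : ℝ => t * t) a := by
    rw [cfc_mul _ _ a (by fun_prop) (by fun_prop), cfc_id' ℝ a hsa]
  have h2 : μ • a = cfc (fun t : ℝ => μ * t) a := by rw [cfc_const_mul_id μ a hsa]
  rw [h1, h2]
  exact cfc_congr fun t ht => by
    rcases hspec ht with h | h
    · simp [h]
    · simp only [Set.mem_singleton_iff] at h; rw [h]

lemma spec_dichotomy [Nontrivial A] {a : A} (ha : 0 ≤ a) :
    spectrum ℝ a ⊆ {0, ‖a‖} ∨ ∃ t ∈ spectrum ℝ a, 0 < t ∧ t < ‖a‖ := by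
  by_cases hs : spectrum ℝ a ⊆ {0, ‖a‖}
  · exact Or.inl hs
  · right
    rw [Set.not_subset] at hs
    obtain ⟨t, ht, htne⟩ := hs
    simp only [Set.mem_insert_iff, Set.mem_singleton_iff, not_or] at htne
    have h0 : 0 ≤ t := spectrum_nonneg_of_nonneg ha ht
    have h1 : t ≤ ‖a‖ := by
      have := spectrum.norm_le_norm_of_mem ht
      rwa [Real.norm_eq_abs, abs_of_nonneg h0] at this
    exact ⟨t, ht, lt_of_le_of_ne h0 (Ne.symm htne.1), lt_of_le_of_ne h1 htne.2⟩

lemma exists_mid (hsimple : IsSimpleCStarAlgebra A) {F H : A} (hF : F ≠ 0) (hH : H ≠ 0)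
    (hFH : ∀ u : A, F * u * H = 0) : False := by
  classical
  set carrier : Set A := {z | ∀ u : A, F * u * z = 0} with hcarrier
  have h0 : (0 : A) ∈ carrier := fun u => by simp
  have hadd : ∀ {x y : A}, x ∈ carrier → y ∈ carrier → x + y ∈ carrier := by
    intro x y hx hy u; rw [mul_add, hx u, hy u, add_zero]
  have hneg : ∀ {x : A}, x ∈ carrier → -x ∈ carrier := by
    intro x hx u; rw [mul_neg, hx u, neg_zero]
  have hml : ∀ {x y : A}, y ∈ carrier → x * y ∈ carrier := by
    intro x y hy u
    have h := hy (u * x)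
    calc F * u * (x * y) = F * (u * x) * y := by noncomm_ring
      _ = 0 := h
  have hmr : ∀ {x y : A}, x ∈ carrier → x * y ∈ carrier := by
    intro x y hx u
    rw [← mul_assoc, hx u, zero_mul]
  set J : TwoSidedIdeal A := TwoSidedIdeal.mk' carrier h0 hadd hneg hml hmr with hJ
  have hmem : ∀ z : A, z ∈ J ↔ z ∈ carrier := fun z =>
    TwoSidedIdeal.mem_mk' carrier h0 hadd hneg hml hmr z
  have hclosed : IsClosed (J : Set A) := by
    have : (J : Set A) = ⋂ u : A, (fun z => F * u * z) ⁻¹' {0} := by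
      ext z
      simp only [SetLike.mem_coe, hmem, Set.mem_iInter, Set.mem_preimage, Set.mem_singleton_iff]
      rfl
    rw [this]
    exact isClosed_iInter fun u =>
      IsClosed.preimage (continuous_mul_left (F * u)) isClosed_singleton
  rcases hsimple J hclosed with hbot | htop
  · have : H ∈ J := (hmem H).mpr hFH
    rw [hbot, TwoSidedIdeal.mem_bot] at this
    exact hH this
  · have : (1 : A) ∈ J := by rw [htop]; exact TwoSidedIdeal.mem_top A
    have h1 := (hmem 1).mp this (star F)
    rw [mul_one, CStarRing.mul_star_self_eq_zero_iff] at h1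
    exact hF h1
end Aux3

section Aux4
variable {A : Type*} [CStarAlgebra A] [PartialOrder A] [StarOrderedRing A]

lemma finiteDimensional_of_minimal_idempotent (hsimple : IsSimpleCStarAlgebra A)
    {q : A} (hq0 : q ≠ 0) (hqi : q * q = q)
    (hmin : ∀ z : A, z = q * z * q → ∃ c : ℂ, z = c • q) : FiniteDimensional ℂ A := by
  classical
  set S : Set A := {y | ∃ p : A × A, y = p.1 * q * p.2} with hS
  set M : Submodule ℂ A := (Submodule.span ℂ S).topologicalClosure with hM
  have hspanl : ∀ (w : A), ∀ z ∈ Submodule.span ℂ S, w * z ∈ Submodule.span ℂ S := by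
    intro w z hz
    induction hz using Submodule.span_induction with
    | mem y hy =>
      obtain ⟨p, rfl⟩ := hy
      exact Submodule.subset_span ⟨(w * p.1, p.2), by noncomm_ring⟩
    | zero => simpa using Submodule.zero_mem _
    | add y z _ _ hy hz => rw [mul_add]; exact Submodule.add_mem _ hy hz
    | smul c y _ hy => rw [mul_smul_comm]; exact Submodule.smul_mem _ c hy
  have hspanr : ∀ (w : A), ∀ z ∈ Submodule.span ℂ S, z * w ∈ Submodule.span ℂ S := by
    intro w z hz
    induction hz using Submodule.span_induction with
    | mem y hy =>
      obtain ⟨p, rfl⟩ := hy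
      exact Submodule.subset_span ⟨(p.1, p.2 * w), by noncomm_ring⟩
    | zero => simpa using Submodule.zero_mem _
    | add y z _ _ hy hz => rw [add_mul]; exact Submodule.add_mem _ hy hz
    | smul c y _ hy => rw [smul_mul_assoc]; exact Submodule.smul_mem _ c hy
  have hMc : (M : Set A) = closure ((Submodule.span ℂ S : Submodule ℂ A) : Set A) :=
    Submodule.topologicalClosure_coe (Submodule.span ℂ S)
  have hMl : ∀ {x z : A}, z ∈ M → x * z ∈ M := by
    intro x z hz
    have hz' : z ∈ closure ((Submodule.span ℂ S : Submodule ℂ A) : Set A) := by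
      rw [← hMc]; exact hz
    have h1 : x * z ∈ closure ((x * ·) '' ((Submodule.span ℂ S : Submodule ℂ A) : Set A)) :=
      image_closure_subset_closure_image (continuous_mul_left x) ⟨z, hz', rfl⟩
    have h2 : x * z ∈ closure ((Submodule.span ℂ S : Submodule ℂ A) : Set A) := by
      refine closure_mono ?_ h1
      rintro _ ⟨y, hy, rfl⟩
      exact hspanl x y hy
    show x * z ∈ (M : Set A)
    rw [hMc]; exact h2
  have hMr : ∀ {x z : A}, x ∈ M → x * z ∈ M := by
    intro x z hx
    have hx' : x ∈ closure ((Submodule.span ℂ S : Submodule ℂ A) : Set A) := by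
      rw [← hMc]; exact hx
    have h1 : x * z ∈ closure ((· * z) '' ((Submodule.span ℂ S : Submodule ℂ A) : Set A)) :=
      image_closure_subset_closure_image (continuous_mul_right z) ⟨x, hx', rfl⟩
    have h2 : x * z ∈ closure ((Submodule.span ℂ S : Submodule ℂ A) : Set A) := by
      refine closure_mono ?_ h1
      rintro _ ⟨y, hy, rfl⟩
      exact hspanr z y hy
    show x * z ∈ (M : Set A)
    rw [hMc]; exact h2
  set J : TwoSidedIdeal A := TwoSidedIdeal.mk' (M : Set A) M.zero_mem
    (fun hx hy => M.add_mem hx hy) (fun hx => M.neg_mem hx) hMl hMr with hJ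
  have hmem : ∀ z : A, z ∈ J ↔ z ∈ M := fun z => TwoSidedIdeal.mem_mk' _ _ _ _ _ _ z
  have hclosed : IsClosed (J : Set A) := by
    have : (J : Set A) = (M : Set A) := TwoSidedIdeal.coe_mk' _ _ _ _ _ _
    rw [this]
    exact Submodule.isClosed_topologicalClosure _
  have hqJ : q ∈ J := by
    rw [hmem]
    exact Submodule.le_topologicalClosure _ (Submodule.subset_span ⟨(1, 1), by simp⟩)
  rcases hsimple J hclosed with hbot | htop
  · rw [hbot, TwoSidedIdeal.mem_bot] at hqJ
    exact absurd hqJ hq0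
  · have h1 : (1 : A) ∈ M := by
      rw [← hmem]; rw [htop]; exact TwoSidedIdeal.mem_top A
    have h1' : (1 : A) ∈ closure ((Submodule.span ℂ S : Submodule ℂ A) : Set A) := by
      rw [← hMc]; exact h1
    obtain ⟨v, hvmem, hvdist⟩ := Metric.mem_closure_iff.mp h1' 1 one_pos
    rw [dist_eq_norm] at hvdist
    have hvunit : IsUnit v := by
      have := (Units.oneSub (1 - v) hvdist).isUnit
      rwa [Units.val_oneSub, sub_sub_cancel] at this
    obtain ⟨u, hu⟩ := hvunit
    obtain ⟨c, hsupp, hsum⟩ := Submodule.mem_span_set.mp hvmem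
    set P : A → A × A := fun m => if h : ∃ p : A × A, m = p.1 * q * p.2 then h.choose else (0, 0)
      with hP
    have hPm : ∀ m ∈ c.support, m = (P m).1 * q * (P m).2 := by
      intro m hm
      have hmS : ∃ p : A × A, m = p.1 * q * p.2 := hsupp hm
      rw [hP]
      simp only [hmS, dif_pos]
      exact hmS.choose_spec
    set S₀ : Set A := (fun pr : A × A => (P pr.1).1 * q * (P pr.2).2) ''
      ((c.support : Set A) ×ˢ (c.support : Set A)) with hS₀
    set L : A →ₗ[ℂ] A :=
      (LinearMap.mulLeft ℂ ((↑u⁻¹ : A))).comp (LinearMap.mulRight ℂ ((↑u⁻¹ : A))) with hL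
    set T : Set A := L '' S₀ with hT
    have hTfin : T.Finite :=
      ((c.support.finite_toSet.prod c.support.finite_toSet).image _).image _
    have hspan : ∀ x : A, x ∈ Submodule.span ℂ T := by
      intro x
      have hvxv : v * x * v ∈ Submodule.span ℂ S₀ := by
        rw [← hsum, Finsupp.sum]
        rw [Finset.sum_mul, Finset.sum_mul]
        apply Submodule.sum_mem
        intro m hm
        rw [Finset.mul_sum]
        apply Submodule.sum_mem
        intro m' hm'
        have hterm : c m • m * x * (c m' • m') = (c m * c m') • (m * x * m') := by
          rw [smul_mul_assoc, smul_mul_assoc, mul_smul_comm, smul_smul]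
        rw [hterm]
        apply Submodule.smul_mem
        have hmid : q * ((P m).2 * x * (P m').1) * q
            = q * (q * ((P m).2 * x * (P m').1) * q) * q := by
          rw [show q * (q * ((P m).2 * x * (P m').1) * q) * q
              = (q * q) * ((P m).2 * x * (P m').1) * (q * q) from by noncomm_ring, hqi]
        obtain ⟨γ, hγ⟩ := hmin (q * ((P m).2 * x * (P m').1) * q) hmid
        have hmm : m * x * m' = γ • ((P m).1 * q * (P m').2) := by
          conv_lhs => rw [hPm m hm, hPm m' hm']
          rw [show (P m).1 * q * (P m).2 * x * ((P m').1 * q * (P m').2)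
              = (P m).1 * (q * ((P m).2 * x * (P m').1) * q) * (P m').2 from by noncomm_ring,
            hγ, mul_smul_comm, smul_mul_assoc]
        rw [hmm]
        apply Submodule.smul_mem
        exact Submodule.subset_span ⟨(m, m'), ⟨Set.mk_mem_prod hm hm', rfl⟩⟩
      have hx : x = L (v * x * v) := by
        have : L (v * x * v) = (↑u⁻¹ * v) * x * (v * ↑u⁻¹) := by
          simp only [hL, LinearMap.coe_comp, Function.comp_apply, LinearMap.mulLeft_apply,
            LinearMap.mulRight_apply]
          noncomm_ring
        rw [this, ← hu, Units.inv_mul, Units.mul_inv, one_mul, mul_one]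
      rw [hx, hT, ← Submodule.map_span]
      exact Submodule.mem_map_of_mem hvxv
    have hfg : (⊤ : Submodule ℂ A).FG := by
      refine ⟨hTfin.toFinset, ?_⟩
      rw [Set.Finite.coe_toFinset]
      exact le_antisymm le_top (fun x _ => hspan x)
    exact Module.finite_def.mpr hfg
end Aux4

section Main
variable {A : Type*} [CStarAlgebra A] [PartialOrder A] [StarOrderedRing A]

lemma cuntz_of_le_smul {a b : A} {K : ℝ} (hK : 0 < K) (ha : 0 ≤ a) (hab : a ≤ K • b) :
    CuntzSubeq a b := by
  have h1 : K⁻¹ • a ≤ b := by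
    have h := rsmul_mono_right (inv_nonneg.mpr hK.le) hab
    rwa [smul_smul, inv_mul_cancel₀ hK.ne', one_smul] at h
  have h2 := cuntz_of_le (rsmul_nonneg (inv_nonneg.mpr hK.le) ha) h1
  have h3 := cuntz_smul_left hK.le h2
  rwa [smul_smul, mul_inv_cancel₀ hK.ne', one_smul] at h3

end Main

/-- In an infinite-dimensional unital simple C*-algebra, below any nonzero
positive element `b` one finds two orthogonal, Cuntz equivalent, norm-one
positive elements `b₁, b₂` with `b₁ + b₂ ≾ b`. -/
theorem exists_orthogonal_cuntz_equivalent_below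
    {A : Type*} [CStarAlgebra A] [PartialOrder A] [StarOrderedRing A]
    (hsimple : IsSimpleCStarAlgebra A)
    (hinfdim : ¬ FiniteDimensional ℂ A)
    (b : A) (hb : 0 ≤ b) (hb0 : b ≠ 0) :
    ∃ b₁ b₂ : A, 0 ≤ b₁ ∧ 0 ≤ b₂ ∧ ‖b₁‖ = 1 ∧ ‖b₂‖ = 1 ∧
      b₁ * b₂ = 0 ∧ CuntzSubeq b₁ b₂ ∧ CuntzSubeq b₂ b₁ ∧
      CuntzSubeq (b₁ + b₂) b := by
  have hnt : Nontrivial A := by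
    rcases subsingleton_or_nontrivial A with hsub | h
    · haveI := hsub
      exact absurd (Module.finite_def.mpr ⟨∅, Subsingleton.elim _ _⟩) hinfdim
    · exact h
  by_cases HP : ∃ f h : A, 0 ≤ f ∧ 0 ≤ h ∧ f ≠ 0 ∧ h ≠ 0 ∧ f * h = 0 ∧
      ∃ C : ℝ, 0 < C ∧ f + h ≤ C • b
  · -- main construction
    obtain ⟨f, h, hf0, hh0, hfne, hhne, hfh, C, hC, hle⟩ := HP
    have hfsa : star f = f := IsSelfAdjoint.of_nonneg hf0
    have hhsa : star h = h := IsSelfAdjoint.of_nonneg hh0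
    set F := CFC.sqrt f with hFdef
    set H := CFC.sqrt h with hHdef
    have hFsa : star F = F := IsSelfAdjoint.of_nonneg (CFC.sqrt_nonneg _)
    have hHsa : star H = H := IsSelfAdjoint.of_nonneg (CFC.sqrt_nonneg _)
    have hFF : F * F = f := CFC.sqrt_mul_sqrt_self f hf0
    have hHH : H * H = h := CFC.sqrt_mul_sqrt_self h hh0
    have hFne : F ≠ 0 := fun hz => hfne (by rw [← hFF, hz, mul_zero])
    have hHne : H ≠ 0 := fun hz => hhne (by rw [← hHH, hz, mul_zero])
    have hfH : f * H = 0 := by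
      have h1 : (f * H) * star (f * H) = 0 := by
        rw [star_mul, hHsa, hfsa, show f * H * (H * f) = f * (H * H) * f from by noncomm_ring,
          hHH, show f * h * f = (f * h) * f from by noncomm_ring, hfh, zero_mul]
      rwa [CStarRing.mul_star_self_eq_zero_iff] at h1
    have hHf : H * f = 0 := by
      have := congrArg star hfH
      rwa [star_mul, hHsa, hfsa, star_zero] at this
    have hFH0 : F * H = 0 := by
      have h1 : star (F * H) * (F * H) = 0 := by
        rw [star_mul, hHsa, hFsa, show H * F * (F * H) = H * ((F * F) * H) from by noncomm_ring,
          hFF, show H * (f * H) = (H * f) * H from by noncomm_ring, hHf, zero_mul]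
      rwa [CStarRing.star_mul_self_eq_zero_iff] at h1
    have hexz : ∃ u : A, F * u * H ≠ 0 := by
      by_contra hcon
      push_neg at hcon
      exact exists_mid hsimple hFne hHne hcon
    obtain ⟨z, hz⟩ := hexz
    set x := F * z * H with hxdef
    have hν : 0 < ‖x‖ := norm_pos_iff.mpr hz
    set c : ℝ := (‖x‖ ^ 2)⁻¹ with hcdef
    have hc : 0 < c := by positivity
    have hstarx : star x = H * star z * F := by
      rw [hxdef, star_mul, star_mul, hHsa, hFsa, mul_assoc]
    have hxsxs : star x * star x = 0 := by
      rw [hstarx, show H * star z * F * (H * star z * F) = H * star z * (F * H) * (star z * F)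
        from by noncomm_ring, hFH0, mul_zero, zero_mul]
    refine ⟨c • (x * star x), c • (star x * x),
      rsmul_nonneg hc.le (mul_star_self_nonneg x),
      rsmul_nonneg hc.le (star_mul_self_nonneg x), ?_, ?_, ?_, ?_, ?_, ?_⟩
    · rw [norm_smul, Real.norm_eq_abs, abs_of_pos hc, CStarRing.norm_self_mul_star, hcdef]
      field_simp [pow_two]
    · rw [norm_smul, Real.norm_eq_abs, abs_of_pos hc, CStarRing.norm_star_mul_self, hcdef]
      field_simp [pow_two]
    · rw [smul_mul_assoc, mul_smul_comm, smul_smul,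
        show x * star x * (star x * x) = x * (star x * star x) * x from by noncomm_ring,
        hxsxs, mul_zero, zero_mul, smul_zero]
    · exact cuntz_smul_both c (cuntz_mul_star x)
    · have h1 := cuntz_smul_both c (cuntz_mul_star (star x))
      rwa [star_star] at h1
    · -- b₁ + b₂ ≾ b
      set w₁ := z * h * star z with hw₁def
      set w₂ := star z * f * z with hw₂def
      have hw₁0 : 0 ≤ w₁ := star_right_conjugate_nonneg hh0 z
      have hw₂0 : 0 ≤ w₂ := star_left_conjugate_nonneg hf0 z
      have hxx : x * star x = F * w₁ * F := by
        rw [hxdef, hstarx, hw₁def, ← hHH]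
        noncomm_ring
      have hxsx : star x * x = H * w₂ * H := by
        rw [hxdef, hstarx, hw₂def, ← hFF]
        noncomm_ring
      set K : ℝ := ‖w₁‖ + ‖w₂‖ + 1 with hKdef
      have hK1 : ‖w₁‖ ≤ K := by rw [hKdef]; have := norm_nonneg w₂; linarith
      have hK2 : ‖w₂‖ ≤ K := by rw [hKdef]; have := norm_nonneg w₁; linarith
      have hKpos : 0 < K := by rw [hKdef]; have := norm_nonneg w₁; have := norm_nonneg w₂; linarith
      have hconj1 : x * star x ≤ ‖w₁‖ • f := by
        have h1 : w₁ ≤ ‖w₁‖ • 1 := by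
          have := IsSelfAdjoint.le_algebraMap_norm_self (IsSelfAdjoint.of_nonneg hw₁0)
          rwa [Algebra.algebraMap_eq_smul_one] at this
        have h2 := star_left_conjugate_le_conjugate h1 F
        rw [hFsa] at h2
        rw [hxx]
        calc F * w₁ * F ≤ F * (‖w₁‖ • 1) * F := h2
          _ = ‖w₁‖ • f := by rw [mul_smul_comm, smul_mul_assoc, mul_one, hFF]
      have hconj2 : star x * x ≤ ‖w₂‖ • h := by
        have h1 : w₂ ≤ ‖w₂‖ • 1 := by
          have := IsSelfAdjoint.le_algebraMap_norm_self (IsSelfAdjoint.of_nonneg hw₂0)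
          rwa [Algebra.algebraMap_eq_smul_one] at this
        have h2 := star_left_conjugate_le_conjugate h1 H
        rw [hHsa] at h2
        rw [hxsx]
        calc H * w₂ * H ≤ H * (‖w₂‖ • 1) * H := h2
          _ = ‖w₂‖ • h := by rw [mul_smul_comm, smul_mul_assoc, mul_one, hHH]
      have hsum : x * star x + star x * x ≤ (K * C) • b := by
        calc x * star x + star x * x ≤ ‖w₁‖ • f + ‖w₂‖ • h := add_le_add hconj1 hconj2
          _ ≤ K • f + K • h := add_le_add (rsmul_mono_scalar hK1 hf0) (rsmul_mono_scalar hK2 hh0)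
          _ = K • (f + h) := (smul_add K f h).symm
          _ ≤ K • (C • b) := rsmul_mono_right hKpos.le hle
          _ = (K * C) • b := by rw [smul_smul]
      rw [← smul_add]
      have hble : c • (x * star x + star x * x) ≤ (c * (K * C)) • b := by
        have := rsmul_mono_right hc.le hsum
        rwa [smul_smul] at this
      exact cuntz_of_le_smul (by positivity) (rsmul_nonneg hc.le
        (add_nonneg (mul_star_self_nonneg x) (star_mul_self_nonneg x))) hble
  · -- derive finite-dimensionality, contradiction
    exfalso
    apply hinfdim
    have NP : ∀ f h : A, 0 ≤ f → 0 ≤ h → f * h = 0 →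
        (∃ C : ℝ, 0 < C ∧ f + h ≤ C • b) → f = 0 ∨ h = 0 := by
      intro f h hf0 hh0 hfh hex
      by_contra hcon
      push_neg at hcon
      exact HP ⟨f, h, hf0, hh0, hcon.1, hcon.2, hfh, hex⟩
    set lam : ℝ := ‖b‖ with hlam
    have hlam0 : 0 < lam := norm_pos_iff.mpr hb0
    have hbsa : star b = b := IsSelfAdjoint.of_nonneg hb
    -- spectrum of b is {0, lam}
    have hspec : spectrum ℝ b ⊆ {0, lam} := by
      rcases spec_dichotomy hb with hs | ⟨t, ht, ht0, htn⟩
      · exact hs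
      · exfalso
        obtain ⟨f, h, hf0, hh0, hfne, hhne, hfh, hfhle⟩ :=
          exists_orth_pair hb ht (CStarAlgebra.norm_mem_spectrum_of_nonneg hb) ht0 htn
        rcases NP f h hf0 hh0 hfh ⟨1, one_pos, by rwa [one_smul]⟩ with h' | h'
        · exact hfne h'
        · exact hhne h'
    have hbb : b * b = lam • b := sq_eq_smul_of_two_point_spectrum hb hspec
    obtain ⟨q, hqdef⟩ : ∃ q : A, q = lam⁻¹ • b := ⟨_, rfl⟩
    have hq0 : q ≠ 0 := by rw [hqdef]; exact smul_ne_zero (inv_ne_zero hlam0.ne') hb0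
    have hqnn : 0 ≤ q := by rw [hqdef]; exact rsmul_nonneg (inv_nonneg.mpr hlam0.le) hb
    have hqsa : star q = q := IsSelfAdjoint.of_nonneg hqnn
    have hqq : q * q = q := by
      rw [hqdef, smul_mul_assoc, mul_smul_comm, smul_smul, hbb, smul_smul]
      congr 1
      field_simp
    -- corner lemma for nonneg elements
    have corner0 : ∀ a : A, a = q * a * q → 0 ≤ a → ∃ r : ℝ, a = r • q := by
      intro a haq ha
      by_cases ha0 : a = 0
      · exact ⟨0, by rw [ha0, zero_smul]⟩
      have hμ : 0 < ‖a‖ := norm_pos_iff.mpr ha0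
      have haleq : a ≤ ‖a‖ • q := by
        have h1 : a ≤ ‖a‖ • 1 := by
          have := IsSelfAdjoint.le_algebraMap_norm_self (IsSelfAdjoint.of_nonneg ha)
          rwa [Algebra.algebraMap_eq_smul_one] at this
        have h2 := star_left_conjugate_le_conjugate h1 q
        rw [hqsa, ← haq] at h2
        calc a ≤ q * (‖a‖ • 1) * q := h2
          _ = ‖a‖ • q := by rw [mul_smul_comm, smul_mul_assoc, mul_one, hqq]
      have haleb : a ≤ (‖a‖ * lam⁻¹) • b := by
        calc a ≤ ‖a‖ • q := haleq
          _ = (‖a‖ * lam⁻¹) • b := by rw [hqdef, smul_smul]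
      have hsp : spectrum ℝ a ⊆ {0, ‖a‖} := by
        rcases spec_dichotomy ha with hs | ⟨t, ht, ht0, htn⟩
        · exact hs
        · exfalso
          obtain ⟨f, h, hf0, hh0, hfne, hhne, hfh, hfhle⟩ :=
            exists_orth_pair ha ht (CStarAlgebra.norm_mem_spectrum_of_nonneg ha) ht0 htn
          have hfhb : f + h ≤ (‖a‖ * lam⁻¹) • b := le_trans hfhle haleb
          rcases NP f h hf0 hh0 hfh ⟨‖a‖ * lam⁻¹, by positivity, hfhb⟩ with h' | h'
          · exact hfne h'
          · exact hhne h'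
      have hsq : a * a = ‖a‖ • a := sq_eq_smul_of_two_point_spectrum ha hsp
      obtain ⟨e, hedef⟩ : ∃ e : A, e = ‖a‖⁻¹ • a := ⟨_, rfl⟩
      have hae : a = ‖a‖ • e := by rw [hedef, smul_smul, mul_inv_cancel₀ hμ.ne', one_smul]
      have he0 : 0 ≤ e := by rw [hedef]; exact rsmul_nonneg (inv_nonneg.mpr hμ.le) ha
      have hesa : star e = e := IsSelfAdjoint.of_nonneg he0
      have hee : e * e = e := by
        rw [hedef, smul_mul_assoc, mul_smul_comm, smul_smul, hsq, smul_smul]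
        congr 1
        field_simp
      have heq : e = q * e * q := by
        rw [hedef, mul_smul_comm, smul_mul_assoc, ← haq]
      have heqq : e * q = e := by
        conv_lhs => rw [heq]
        rw [mul_assoc (q * e) q q, hqq, ← heq]
      have hqe : q * e = e := by
        conv_lhs => rw [heq]
        rw [show q * (q * e * q) = (q * q) * e * q from by noncomm_ring, hqq, ← heq]
      by_cases heq' : e = q
      · exact ⟨‖a‖, by conv_lhs => rw [hae, heq']⟩
      · exfalso
        have hqe0 : 0 ≤ q - e := by
          have hqesa : star (q - e) * (q - e) = q - e := by
            rw [star_sub, hqsa, hesa, sub_mul, mul_sub, mul_sub, hqq, hee, hqe, heqq]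
            abel
          rw [← hqesa]
          exact star_mul_self_nonneg _
        have hene : e ≠ 0 := fun h0 => ha0 (by rw [hae, h0, smul_zero])
        have hqene : q - e ≠ 0 := sub_ne_zero_of_ne fun h0 => heq' h0.symm
        have horth : e * (q - e) = 0 := by rw [mul_sub, heqq, hee, sub_self]
        have hsum : e + (q - e) = q := by abel
        have hqb : e + (q - e) ≤ lam⁻¹ • b := by rw [hsum, hqdef]
        rcases NP e (q - e) he0 hqe0 horth ⟨lam⁻¹, by positivity, hqb⟩ with h' | h'
        · exact hene h'
        · exact hqene h'
    -- corner lemma for all elements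
    have corner : ∀ z : A, z = q * z * q → ∃ γ : ℂ, z = γ • q := by
      have hsa_case : ∀ y : A, y = q * y * q → star y = y → ∃ r : ℝ, y = r • q := by
        intro y hyq hysa
        have hny : (0:A) ≤ y + ‖y‖ • (1:A) := by
          have h1 := IsSelfAdjoint.neg_algebraMap_norm_le_self (show IsSelfAdjoint y from hysa)
          rw [Algebra.algebraMap_eq_smul_one] at h1
          have h2 := add_le_add_right h1 (‖y‖ • (1:A))
          rwa [add_neg_cancel, add_comm] at h2
        have h1 : (0:A) ≤ y + ‖y‖ • q := by
          have h2 := star_left_conjugate_nonneg hny q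
          rw [hqsa] at h2
          calc (0:A) = q * 0 * q := by rw [mul_zero, zero_mul]
            _ ≤ q * (y + ‖y‖ • 1) * q := by
                rw [mul_zero, zero_mul]; exact h2
            _ = y + ‖y‖ • q := by
                rw [mul_add, add_mul, mul_smul_comm, smul_mul_assoc, mul_one, hqq, ← hyq]
        have h3 : y + ‖y‖ • q = q * (y + ‖y‖ • q) * q := by
          rw [mul_add, add_mul, mul_smul_comm, smul_mul_assoc]
          rw [show q * q * q = q from by rw [hqq, hqq], ← hyq]
        obtain ⟨r, hr⟩ := corner0 _ h3 h1
        refine ⟨r - ‖y‖, ?_⟩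
        rw [sub_smul, ← hr]
        abel
      intro z hzq
      have hstarzq : q * star z * q = star z := by
        conv_rhs => rw [hzq]
        rw [star_mul, star_mul, hqsa]
        noncomm_ring
      obtain ⟨y₁, hy₁def⟩ : ∃ y : A, y = (2:ℂ)⁻¹ • (z + star z) := ⟨_, rfl⟩
      obtain ⟨y₂, hy₂def⟩ : ∃ y : A, y = ((2:ℂ)⁻¹ * Complex.I) • (star z - z) := ⟨_, rfl⟩
      have hy₁sa : star y₁ = y₁ := by
        rw [hy₁def, star_smul, star_add, star_star]
        simp [add_comm]
      have hy₂sa : star y₂ = y₂ := by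
        rw [hy₂def, star_smul, star_sub, star_star]
        simp only [star_mul', Complex.star_def, map_inv₀, Complex.conj_ofNat, Complex.conj_I]
        rw [show (2:ℂ)⁻¹ * -Complex.I = -((2:ℂ)⁻¹ * Complex.I) from by ring, neg_smul, ← smul_neg,
          neg_sub]
      have hy₁q : y₁ = q * y₁ * q := by
        rw [hy₁def, mul_smul_comm, smul_mul_assoc, mul_add, add_mul, hstarzq, ← hzq]
      have hy₂q : y₂ = q * y₂ * q := by
        rw [hy₂def, mul_smul_comm, smul_mul_assoc, mul_sub, sub_mul, hstarzq, ← hzq]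
      obtain ⟨r₁, hr₁⟩ := hsa_case y₁ hy₁q hy₁sa
      obtain ⟨r₂, hr₂⟩ := hsa_case y₂ hy₂q hy₂sa
      refine ⟨(r₁ : ℂ) + Complex.I * (r₂ : ℂ), ?_⟩
      have hz12 : z = y₁ + Complex.I • y₂ := by
        rw [hy₁def, hy₂def, smul_smul,
          show Complex.I * ((2:ℂ)⁻¹ * Complex.I) = -(2:ℂ)⁻¹ from by
            rw [mul_comm (2:ℂ)⁻¹, ← mul_assoc, Complex.I_mul_I]; ring]
        rw [smul_add, neg_smul, smul_sub]
        module
      have hcoe : ∀ (r : ℝ) (v : A), (r : ℂ) • v = r • v := fun r v => by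
        rw [← Complex.coe_algebraMap, algebraMap_smul]
      rw [hz12, hr₁, hr₂, ← hcoe r₁, ← hcoe r₂, smul_smul, add_smul]
    exact finiteDimensional_of_minimal_idempotent hsimple hq0 hqq corner
end

section
/- Let A be a C*-algebra, let a, b ∈ A be positive elements, and let ε > 0 satisfy ‖a − b‖ < ε. Then (a − ε)₊ is Cuntz subequivalent to b, where (a − ε)₊ denotes the positive element obtained by applying the continuous function t ↦ max(t − ε, 0) to a via the continuous functional calculus. -/
open Filter Topology

namespace CuntzAux



noncomputable def gfun (δ t : ℝ) : ℝ := Real.sqrt t / (max t 0 + δ)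
noncomputable def psi (δ t : ℝ) : ℝ := gfun δ t * t * gfun δ t
noncomputable def theta (δ t : ℝ) : ℝ := Real.sqrt (1 - psi δ t)

lemma gfun_cont {δ : ℝ} (hδ : 0 < δ) : Continuous (gfun δ) := by
  apply Real.continuous_sqrt.div ((continuous_id.max continuous_const).add continuous_const)
  intro t
  have : (0:ℝ) < max t 0 + δ := by positivity
  exact this.ne'

lemma gfun_zero {δ : ℝ} : gfun δ 0 = 0 := by simp [gfun]

lemma gfun_nonneg {δ t : ℝ} (hδ : 0 < δ) : 0 ≤ gfun δ t :=
  div_nonneg (Real.sqrt_nonneg _) (by positivity)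

lemma psi_cont {δ : ℝ} (hδ : 0 < δ) : Continuous (psi δ) :=
  ((gfun_cont hδ).mul continuous_id).mul (gfun_cont hδ)

lemma psi_zero {δ : ℝ} : psi δ 0 = 0 := by simp [psi, gfun]

lemma psi_eq {δ t : ℝ} (hδ : 0 < δ) (ht : 0 ≤ t) : psi δ t = t^2/(t+δ)^2 := by
  have h1 : Real.sqrt t * Real.sqrt t = t := Real.mul_self_sqrt ht
  have h2 : t + δ ≠ 0 := by positivity
  rw [psi, gfun, max_eq_left ht]
  field_simp
  linear_combination t * h1

lemma psi_le_one {δ : ℝ} (hδ : 0 < δ) (t : ℝ) : psi δ t ≤ 1 := by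
  rcases le_or_gt t 0 with ht | ht
  · rw [psi, gfun, Real.sqrt_eq_zero_of_nonpos ht]
    norm_num
  · rw [psi_eq hδ ht.le]
    rw [div_le_one (by positivity)]
    nlinarith

lemma psi_nonneg {δ : ℝ} (hδ : 0 < δ) (t : ℝ) : 0 ≤ psi δ t := by
  rcases le_or_gt t 0 with ht | ht
  · rw [psi, gfun, Real.sqrt_eq_zero_of_nonpos ht]
    norm_num
  · rw [psi_eq hδ ht.le]
    positivity

lemma one_sub_psi_mul_le {δ t : ℝ} (hδ : 0 < δ) (ht : 0 ≤ t) :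
    (1 - psi δ t) * t ≤ 2 * δ := by
  rw [psi_eq hδ ht]
  have hs : (0:ℝ) < (t+δ)^2 := by positivity
  rw [show (1 - t^2/(t+δ)^2) = ((t+δ)^2 - t^2)/(t+δ)^2 by field_simp]
  rw [div_mul_eq_mul_div, div_le_iff₀ hs]
  nlinarith [mul_nonneg ht (sq_nonneg δ), mul_pos (mul_pos hδ hδ) hδ]

lemma theta_cont {δ : ℝ} (hδ : 0 < δ) : Continuous (theta δ) :=
  Real.continuous_sqrt.comp (continuous_const.sub (psi_cont hδ))

lemma theta_mul_self {δ : ℝ} (hδ : 0 < δ) (t : ℝ) :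
    theta δ t * theta δ t = 1 - psi δ t :=
  Real.mul_self_sqrt (by linarith [psi_le_one hδ t])

lemma theta_nonneg {δ t : ℝ} : 0 ≤ theta δ t := Real.sqrt_nonneg _

/-- If `0 ≤ p ≤ q`, then `p` is Cuntz subequivalent to `q`. -/
lemma subeq_of_le {A : Type*} [NonUnitalCStarAlgebra A] [PartialOrder A] [StarOrderedRing A]
    (p q : A) (hp : 0 ≤ p) (hpq : p ≤ q) :
    ∃ s : ℕ → A, Tendsto (fun n => ‖s n * q * star (s n) - p‖) atTop (nhds 0) := by
  have hq : 0 ≤ q := hp.trans hpq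
  have hpsa : IsSelfAdjoint p := .of_nonneg hp
  have hqsa : IsSelfAdjoint q := .of_nonneg hq
  set c : A := cfcₙ Real.sqrt p with hc_def
  have hc_nonneg : 0 ≤ c := cfcₙ_nonneg fun x _ => Real.sqrt_nonneg x
  have hcsa : IsSelfAdjoint c := .of_nonneg hc_nonneg
  have hcc : c * c = p := by
    rw [hc_def, ← cfcₙ_mul Real.sqrt Real.sqrt p Real.continuous_sqrt.continuousOn
      (by simp) Real.continuous_sqrt.continuousOn (by simp)]
    calc cfcₙ (fun x => Real.sqrt x * Real.sqrt x) p
        = cfcₙ (id : ℝ → ℝ) p := cfcₙ_congr fun x hx =>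
          Real.mul_self_sqrt (quasispectrum_nonneg_of_nonneg p hp x hx)
      _ = p := cfcₙ_id ℝ p
  refine ⟨fun n => c * cfcₙ (gfun (1/(n+1))) q, ?_⟩
  have key : ∀ n : ℕ, ‖(c * cfcₙ (gfun (1/(n+1))) q) * q * star (c * cfcₙ (gfun (1/(n+1))) q) - p‖
      ≤ 2 * (1/(n+1)) := by
    intro n
    set δ : ℝ := 1/(n+1) with hδ_def
    have hδ : 0 < δ := by positivity
    set w : A := cfcₙ (gfun δ) q with hw_def
    have hw_nonneg : 0 ≤ w := cfcₙ_nonneg fun x _ => gfun_nonneg hδ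
    have hwsa : IsSelfAdjoint w := .of_nonneg hw_nonneg
    have hstar : star (c * w) = w * c := by rw [star_mul, hcsa.star_eq, hwsa.star_eq]
    have hwq : cfcₙ (fun t => gfun δ t * t) q = w * q := by
      rw [cfcₙ_mul (gfun δ) (fun x => x) q ((gfun_cont hδ).continuousOn)
        (by simp [gfun]) (by fun_prop) rfl, cfcₙ_id' ℝ q]
    have hwqw : w * q * w = cfcₙ (psi δ) q := by
      rw [show psi δ = fun t => (gfun δ t * t) * gfun δ t from rfl,
        cfcₙ_mul (fun t => gfun δ t * t) (gfun δ) q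
          (((gfun_cont hδ).mul continuous_id).continuousOn)
          (by simp [gfun]) ((gfun_cont hδ).continuousOn) (by simp [gfun]), hwq]
    have hrw : (c * w) * q * star (c * w) = c * cfcₙ (psi δ) q * c := by
      rw [hstar, ← hwqw]
      simp only [mul_assoc]
    rw [hrw]
    -- move to the unitization
    rw [← Unitization.norm_inr (𝕜 := ℂ)]
    simp only [Unitization.inr_sub, Unitization.inr_mul]
    rw [Unitization.real_cfcₙ_eq_cfc_inr q (psi δ) psi_zero]
    set P : Unitization ℂ A := (p : Unitization ℂ A)
    set Q : Unitization ℂ A := (q : Unitization ℂ A)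
    set C : Unitization ℂ A := (c : Unitization ℂ A)
    have hP : 0 ≤ P := Unitization.inr_nonneg_iff.mpr hp
    have hQ : 0 ≤ Q := Unitization.inr_nonneg_iff.mpr hq
    have hPQ : P ≤ Q := (Unitization.inr_le_iff p q hpsa hqsa).mpr hpq
    have hQsa : IsSelfAdjoint Q := .of_nonneg hQ
    have hCsa : IsSelfAdjoint C := .of_nonneg (Unitization.inr_nonneg_iff.mpr hc_nonneg)
    have hCC : C * C = P := by rw [← Unitization.inr_mul, hcc]
    set u : Unitization ℂ A := cfc (theta δ) Q with hu_def
    have hu_nonneg : 0 ≤ u := cfc_nonneg fun x _ => theta_nonneg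
    have husa : IsSelfAdjoint u := .of_nonneg hu_nonneg
    have huu : u * u = 1 - cfc (psi δ) Q := by
      rw [hu_def, ← cfc_mul _ _ Q ((theta_cont hδ).continuousOn) ((theta_cont hδ).continuousOn)]
      calc cfc (fun x => theta δ x * theta δ x) Q
          = cfc (fun x => 1 - psi δ x) Q := cfc_congr fun x _ => theta_mul_self hδ x
        _ = 1 - cfc (psi δ) Q := by
            rw [cfc_sub _ _ Q continuousOn_const ((psi_cont hδ).continuousOn), cfc_const_one ℝ Q]
    have hexpr : C * cfc (psi δ) Q * C - P = -(C * u * (u * C)) := by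
      have h9 : cfc (psi δ) Q = 1 - u * u := by rw [huu, sub_sub_cancel]
      rw [h9, ← hCC]
      noncomm_ring
    have hstar2 : star (u * C) = C * u := by rw [star_mul, husa.star_eq, hCsa.star_eq]
    have huq : cfc (fun t => theta δ t * t) Q = u * Q := by
      rw [cfc_mul (theta δ) (fun x => x) Q ((theta_cont hδ).continuousOn) (by fun_prop),
        cfc_id' ℝ Q]
    have huqu : u * Q * u = cfc (fun t => theta δ t * t * theta δ t) Q := by
      rw [show (fun t => theta δ t * t * theta δ t) = fun t => (theta δ t * t) * theta δ t
          from rfl,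
        cfc_mul (fun t => theta δ t * t) (theta δ) Q
          (((theta_cont hδ).mul continuous_id).continuousOn)
          ((theta_cont hδ).continuousOn), huq]
    calc ‖C * cfc (psi δ) Q * C - P‖
        = ‖C * u * (u * C)‖ := by rw [hexpr, norm_neg]
      _ = ‖star (u * C) * (u * C)‖ := by rw [hstar2]
      _ = ‖u * C‖ * ‖u * C‖ := CStarRing.norm_star_mul_self
      _ = ‖(u * C) * star (u * C)‖ := CStarRing.norm_self_mul_star.symm
      _ = ‖u * P * u‖ := by
          rw [hstar2, show u * C * (C * u) = u * (C * C) * u by noncomm_ring, hCC]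
      _ ≤ ‖u * Q * u‖ := CStarAlgebra.norm_le_norm_of_nonneg_of_le
          (IsSelfAdjoint.conjugate_nonneg hP husa) (IsSelfAdjoint.conjugate_le_conjugate hPQ husa)
      _ ≤ 2 * δ := by
          rw [huqu]
          refine norm_cfc_le (by positivity) fun x hx => ?_
          have hx0 : 0 ≤ x := spectrum_nonneg_of_nonneg hQ hx
          have h1 : theta δ x * x * theta δ x = (1 - psi δ x) * x := by
            rw [show theta δ x * x * theta δ x = theta δ x * theta δ x * x by ring,
              theta_mul_self hδ x]
          rw [h1, Real.norm_of_nonneg (mul_nonneg (by linarith [psi_le_one hδ x]) hx0)]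
          exact one_sub_psi_mul_le hδ hx0
  refine squeeze_zero (fun n => norm_nonneg _) key ?_
  have := tendsto_one_div_add_atTop_nhds_zero_nat.const_mul (2:ℝ)
  simpa using this



theorem main_construction
    {A : Type*} [NonUnitalCStarAlgebra A] [PartialOrder A] [StarOrderedRing A]
    (a b : A) (ha : 0 ≤ a) (hb : 0 ≤ b) (ε : ℝ) (hε : 0 < ε)
    (h : ‖a - b‖ < ε) :
    ∃ r : ℕ → A, Filter.Tendsto
      (fun n => ‖r n * b * star (r n) - cfcₙ (fun t : ℝ => max (t - ε) 0) a‖)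
      Filter.atTop (nhds 0) := by
  set ε₀ : ℝ := ‖a - b‖ with hε₀_def
  have hε₀ : 0 ≤ ε₀ := norm_nonneg _
  set ε' : ℝ := ε - ε₀ with hε'_def
  have hε' : 0 < ε' := sub_pos.mpr h
  set hfun : ℝ → ℝ := fun t => Real.sqrt (max (t - ε) 0 / max (t - ε₀) ε') with hfun_def
  have hden : ∀ t : ℝ, 0 < max (t - ε₀) ε' := fun t => lt_max_of_lt_right hε'
  have hcont : Continuous hfun := Real.continuous_sqrt.comp <|
    Continuous.div ((continuous_id.sub continuous_const).max continuous_const)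
      ((continuous_id.sub continuous_const).max continuous_const)
      (fun t => (hden t).ne')
  have hfun0 : hfun 0 = 0 := by
    have h0 : max ((0:ℝ) - ε) 0 = 0 := max_eq_right (by linarith)
    show Real.sqrt (max ((0:ℝ) - ε) 0 / max ((0:ℝ) - ε₀) ε') = 0
    rw [h0, zero_div, Real.sqrt_zero]
  have hkey : ∀ t : ℝ, hfun t * t * hfun t - ε₀ * (hfun t * hfun t) = max (t - ε) 0 := by
    intro t
    have hd := hden t
    have hsq : hfun t * hfun t = max (t - ε) 0 / max (t - ε₀) ε' :=
      Real.mul_self_sqrt (div_nonneg (le_max_right _ _) hd.le)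
    rw [show hfun t * t * hfun t = hfun t * hfun t * t by ring, hsq]
    rcases le_or_gt t ε with ht | ht
    · rw [max_eq_right (by linarith : t - ε ≤ 0)]
      simp
    · have h5 : max (t - ε₀) ε' = t - ε₀ := max_eq_left (by simp [hε'_def]; linarith)
      have h6 : t - ε₀ ≠ 0 := by
        have : ε' ≤ t - ε₀ := by simp [hε'_def]; linarith
        linarith
      rw [max_eq_left (by linarith : 0 ≤ t - ε), h5]
      field_simp
  have hasa : IsSelfAdjoint a := .of_nonneg ha
  set e : A := cfcₙ hfun a with he_def
  have he_nonneg : 0 ≤ e := cfcₙ_nonneg fun x _ => Real.sqrt_nonneg _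
  have hesa : IsSelfAdjoint e := .of_nonneg he_nonneg
  set g : A := cfcₙ (fun t : ℝ => max (t - ε) 0) a with hg_def
  have hg_nonneg : 0 ≤ g := cfcₙ_nonneg fun x _ => le_max_right _ _
  have heae : cfcₙ (fun t => hfun t * t) a = e * a := by
    rw [cfcₙ_mul hfun (fun x => x) a hcont.continuousOn hfun0 (by fun_prop) rfl, cfcₙ_id' ℝ a]
  have h_eae : cfcₙ (fun t => (hfun t * t) * hfun t) a = e * a * e := by
    rw [cfcₙ_mul (fun t => hfun t * t) hfun a ((hcont.mul continuous_id).continuousOn)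
      (by simp [hfun0]) hcont.continuousOn hfun0, heae]
  have h_ee : cfcₙ (fun t => ε₀ * (hfun t * hfun t)) a = ε₀ • (e * e) := by
    rw [cfcₙ_const_mul ε₀ (fun t => hfun t * hfun t) a ((hcont.mul hcont).continuousOn)
      (by simp [hfun0]), cfcₙ_mul hfun hfun a hcont.continuousOn hfun0 hcont.continuousOn hfun0]
  have hg_eq : g = e * a * e - ε₀ • (e * e) := by
    calc g = cfcₙ (fun t => (hfun t * t) * hfun t - ε₀ * (hfun t * hfun t)) a :=
          cfcₙ_congr fun t _ => (hkey t).symm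
      _ = cfcₙ (fun t => (hfun t * t) * hfun t) a - cfcₙ (fun t => ε₀ * (hfun t * hfun t)) a :=
          cfcₙ_sub _ _ a ((hcont.mul continuous_id).mul hcont).continuousOn (by simp [hfun0])
            (continuous_const.mul (hcont.mul hcont)).continuousOn (by simp [hfun0])
      _ = e * a * e - ε₀ • (e * e) := by rw [h_eae, h_ee]
  have h1 : e * (a - b) * e ≤ ε₀ • (e * e) := by
    have h2 := CStarAlgebra.star_right_conjugate_le_norm_smul (a := e) (b := a - b)
      (hasa.sub (.of_nonneg hb))
    rwa [hesa.star_eq] at h2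
  have hle : g ≤ e * b * e := by
    rw [hg_eq]
    have h3 : e * a * e - e * b * e = e * (a - b) * e := by rw [mul_sub, sub_mul]
    have h4 : e * a * e - e * b * e ≤ ε₀ • (e * e) := h3 ▸ h1
    exact sub_le_comm.mp h4
  obtain ⟨s, hs⟩ := subeq_of_le g (e * b * e) hg_nonneg hle
  refine ⟨fun n => s n * e, ?_⟩
  have hrw : ∀ n, s n * e * b * star (s n * e) = s n * (e * b * e) * star (s n) := by
    intro n; rw [star_mul, hesa.star_eq]; simp only [mul_assoc]
  simpa only [hrw] using hs

end CuntzAux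



/-- If `a, b` are positive and `‖a - b‖ < ε`, then `(a - ε)₊ ≾ b`, where
`(a - ε)₊` is obtained by applying `t ↦ max (t - ε) 0` to `a` via the
continuous functional calculus. -/
theorem cuntzSubeq_of_norm_sub_lt
    {A : Type*} [NonUnitalCStarAlgebra A] [PartialOrder A] [StarOrderedRing A]
    (a b : A) (ha : 0 ≤ a) (hb : 0 ≤ b) (ε : ℝ) (hε : 0 < ε)
    (h : ‖a - b‖ < ε) :
    CuntzSubeq (cfcₙ (fun t : ℝ => max (t - ε) 0) a) b := by
  unfold CuntzSubeq
  exact CuntzAux.main_construction a b ha hb ε hε h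
end

section
/- Let A be a C*-algebra and let a, b, c, d ∈ A be positive elements such that ab = 0, cd = 0, a is Cuntz subequivalent to c, and b is Cuntz subequivalent to d. Then a + b is Cuntz subequivalent to c + d. -/
open Filter Topology

section Aux

variable {A : Type*} [NonUnitalCStarAlgebra A]

/-- If `c` is selfadjoint and `c * d = 0`, then `cfcₙ f c * d = 0` for any `f : ℝ → ℝ`. -/
lemma cfcn_mul_eq_zero {c : A} (d : A) (hc : IsSelfAdjoint c)
    (hcd : c * d = 0) (f : ℝ → ℝ) : cfcₙ f c * d = 0 := by
  by_cases hf : ContinuousOn f (quasispectrum ℝ c) ∧ f 0 = 0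
  · obtain ⟨hf1, hf0⟩ := hf
    rw [cfcₙ_apply f c hf1 hf0 hc]
    set φ : ContinuousMapZero (quasispectrum ℝ c) ℝ →⋆ₙₐ[ℝ] A := cfcₙHom hc with hφ
    suffices H : ∀ g : ContinuousMapZero (quasispectrum ℝ c) ℝ, φ g * d = 0 from H _
    intro g
    have hS : IsClosed {x : ContinuousMapZero (quasispectrum ℝ c) ℝ | φ x * d = 0} :=
      isClosed_eq ((cfcₙHom_continuous hc).mul continuous_const) continuous_const
    have hid : φ (ContinuousMapZero.id (quasispectrum ℝ c)) = c := cfcₙHom_id hc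
    have hsub : (NonUnitalStarAlgebra.adjoin ℝ
        {(ContinuousMapZero.id (quasispectrum ℝ c) : ContinuousMapZero (quasispectrum ℝ c) ℝ)} : Set _) ⊆
        {x | φ x * d = 0} := by
      rintro x hx
      rw [SetLike.mem_coe] at hx
      induction hx using NonUnitalStarAlgebra.adjoin_induction with
      | mem x hx =>
        simp only [Set.mem_singleton_iff] at hx
        subst hx
        simpa [hid] using hcd
      | add x y _ _ hx hy =>
        simp only [Set.mem_setOf_eq] at *
        rw [map_add, add_mul, hx, hy, add_zero]
      | zero => simp
      | mul x y _ _ hx hy =>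
        simp only [Set.mem_setOf_eq] at *
        rw [map_mul, mul_assoc, hy, mul_zero]
      | smul r x _ hx =>
        simp only [Set.mem_setOf_eq] at *
        rw [map_smul, smul_mul_assoc, hx, smul_zero]
      | star x _ hx => rwa [star_trivial]
    have hg : g ∈ closure (NonUnitalStarAlgebra.adjoin ℝ
        {(ContinuousMapZero.id (quasispectrum ℝ c) : ContinuousMapZero (quasispectrum ℝ c) ℝ)} : Set _) :=
      (ContinuousMapZero.adjoin_id_dense (quasispectrum ℝ c)) g
    exact closure_minimal hsub hS hg
  · rw [not_and_or] at hf
    rcases hf with h | h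
    · rw [cfcₙ_apply_of_not_continuousOn c h, zero_mul]
    · rw [cfcₙ_apply_of_not_map_zero c h, zero_mul]

/-- The auxiliary function `x ↦ √(min ((m+1)x) 1)`. -/
noncomputable def gfun (m : ℕ) (x : ℝ) : ℝ := Real.sqrt (min ((m+1)*x) 1)

lemma gfun_cont (m : ℕ) : Continuous (gfun m) :=
  Real.continuous_sqrt.comp ((continuous_const.mul continuous_id).min continuous_const)

lemma gfun_zero (m : ℕ) : gfun m 0 = 0 := by simp [gfun]

lemma cfc_approx [PartialOrder A] [StarOrderedRing A] {c : A} (hc : 0 ≤ c) (m : ℕ) :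
    ‖cfcₙ (gfun m) c * c * cfcₙ (gfun m) c - c‖ ≤ 1/(m+1) := by
  have hsa : IsSelfAdjoint c := .of_nonneg hc
  have h1 : cfcₙ (gfun m) c * c * cfcₙ (gfun m) c
      = cfcₙ (fun x => gfun m x * x * gfun m x) c := by
    rw [cfcₙ_mul (fun x => gfun m x * x) (gfun m) c
        (((gfun_cont m).mul continuous_id).continuousOn) (by simp [gfun_zero])
        ((gfun_cont m).continuousOn) (gfun_zero m),
      cfcₙ_mul (gfun m) (fun x => x) c ((gfun_cont m).continuousOn) (gfun_zero m)
        continuousOn_id rfl, cfcₙ_id' ℝ c]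
  rw [h1]
  have h2 : cfcₙ (fun x => gfun m x * x * gfun m x) c - c
      = cfcₙ (fun x => gfun m x * x * gfun m x - x) c := by
    rw [cfcₙ_sub (fun x => gfun m x * x * gfun m x) (fun x => x) c
        ((((gfun_cont m).mul continuous_id).mul (gfun_cont m)).continuousOn)
        (by simp [gfun_zero]) continuousOn_id rfl, cfcₙ_id' ℝ c]
  rw [h2]
  apply norm_cfcₙ_le
  intro x hx
  have hx0 : 0 ≤ x := quasispectrum_nonneg_of_nonneg c hc x hx
  have hmin0 : 0 ≤ min ((m+1)*x) 1 := le_min (by positivity) one_pos.le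
  have hsq : gfun m x * x * gfun m x = x * min ((m+1)*x) 1 := by
    rw [gfun]; rw [mul_comm _ x, mul_assoc, Real.mul_self_sqrt hmin0]
  rw [hsq, Real.norm_eq_abs]
  have hm1 : (0:ℝ) < m + 1 := by positivity
  rcases min_cases ((m+1)*x) 1 with ⟨hmin, hle⟩ | ⟨hmin, hlt⟩
  · rw [hmin]
    have hxle : x ≤ 1/((m:ℝ)+1) := by
      rw [le_div_iff₀ hm1]; nlinarith
    rw [abs_le]
    constructor
    · nlinarith [mul_nonneg hx0 (mul_nonneg hm1.le hx0)]
    · nlinarith [mul_nonneg hx0 (sub_nonneg.mpr hle), one_div_pos.mpr hm1]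
  · rw [hmin]
    simp only [mul_one, sub_self, abs_zero]
    positivity

end Aux

/-- If `a, b, c, d` are positive, `a ⟂ b`, `c ⟂ d`, `a ≾ c` and `b ≾ d`, then
`a + b ≾ c + d`. -/
theorem cuntzSubeq_add_of_orthogonal
    {A : Type*} [NonUnitalCStarAlgebra A] [PartialOrder A] [StarOrderedRing A]
    (a b c d : A) (ha : 0 ≤ a) (hb : 0 ≤ b) (hc : 0 ≤ c) (hd : 0 ≤ d)
    (hab : a * b = 0) (hcd : c * d = 0)
    (hac : CuntzSubeq a c) (hbd : CuntzSubeq b d) :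
    CuntzSubeq (a + b) (c + d) := by
  obtain ⟨r, hr⟩ := hac
  obtain ⟨s, hs⟩ := hbd
  have hcsa : IsSelfAdjoint c := .of_nonneg hc
  have hdsa : IsSelfAdjoint d := .of_nonneg hd
  have hdc : d * c = 0 := by
    have := congrArg star hcd
    rwa [star_mul, hcsa.star_eq, hdsa.star_eq, star_zero] at this
  -- choose the cut-off parameter `m n` for each `n`
  have hex : ∀ n : ℕ, ∃ m : ℕ,
      (‖r n‖^2 + ‖s n‖^2) * (1/((m:ℝ)+1)) < 1/((n:ℝ)+1) := by
    intro n
    have h0 : Tendsto (fun m : ℕ => (‖r n‖^2 + ‖s n‖^2) * (1/((m:ℝ)+1)))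
        atTop (nhds 0) := by
      rw [show (0:ℝ) = (‖r n‖^2 + ‖s n‖^2) * 0 by ring]
      exact tendsto_const_nhds.mul tendsto_one_div_add_atTop_nhds_zero_nat
    exact (h0.eventually (gt_mem_nhds (by positivity : (0:ℝ) < 1/((n:ℝ)+1)))).exists
  choose m hm using hex
  set E : ℕ → A := fun n => cfcₙ (gfun (m n)) c with hE
  set F : ℕ → A := fun n => cfcₙ (gfun (m n)) d with hF
  refine ⟨fun n => r n * E n + s n * F n, ?_⟩
  have key : ∀ n, (r n * E n + s n * F n) * (c + d) * star (r n * E n + s n * F n)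
      = r n * (E n * c * E n) * star (r n) + s n * (F n * d * F n) * star (s n) := by
    intro n
    have hEsa : IsSelfAdjoint (E n) := cfcₙ_predicate _ c
    have hFsa : IsSelfAdjoint (F n) := cfcₙ_predicate _ d
    have hEd : E n * d = 0 := cfcn_mul_eq_zero d hcsa hcd (gfun (m n))
    have hFc : F n * c = 0 := cfcn_mul_eq_zero c hdsa hdc (gfun (m n))
    have hdE : d * E n = 0 := by
      have := congrArg star hEd
      rwa [star_mul, hEsa.star_eq, hdsa.star_eq, star_zero] at this
    have hcF : c * F n = 0 := by
      have := congrArg star hFc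
      rwa [star_mul, hFsa.star_eq, hcsa.star_eq, star_zero] at this
    have hEd' : ∀ x : A, E n * (d * x) = 0 := fun x => by
      rw [← mul_assoc, hEd, zero_mul]
    have hdE' : ∀ x : A, d * (E n * x) = 0 := fun x => by
      rw [← mul_assoc, hdE, zero_mul]
    have hcF' : ∀ x : A, c * (F n * x) = 0 := fun x => by
      rw [← mul_assoc, hcF, zero_mul]
    have hFc' : ∀ x : A, F n * (c * x) = 0 := fun x => by
      rw [← mul_assoc, hFc, zero_mul]
    rw [star_add, star_mul, star_mul, hEsa.star_eq, hFsa.star_eq]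
    simp only [mul_add, add_mul, mul_assoc, hEd', hdE', hcF', hFc',
      mul_zero, zero_mul, add_zero, zero_add]
  -- the norm bound
  have hbound : ∀ n, ‖(r n * E n + s n * F n) * (c + d) * star (r n * E n + s n * F n)
      - (a + b)‖ ≤ 1/((n:ℝ)+1) + ‖r n * c * star (r n) - a‖ + ‖s n * d * star (s n) - b‖ := by
    intro n
    rw [key n]
    have hsplit : r n * (E n * c * E n) * star (r n) + s n * (F n * d * F n) * star (s n)
        - (a + b)
        = (r n * (E n * c * E n - c) * star (r n) + s n * (F n * d * F n - d) * star (s n))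
          + ((r n * c * star (r n) - a) + (s n * d * star (s n) - b)) := by
      noncomm_ring
    rw [hsplit]
    have hX1 : ‖r n * (E n * c * E n - c) * star (r n)‖
        ≤ ‖r n‖^2 * (1/((m n:ℝ)+1)) := by
      calc ‖r n * (E n * c * E n - c) * star (r n)‖
          ≤ ‖r n * (E n * c * E n - c)‖ * ‖star (r n)‖ := norm_mul_le _ _
        _ ≤ (‖r n‖ * ‖E n * c * E n - c‖) * ‖star (r n)‖ := by
            gcongr; exact norm_mul_le _ _
        _ = ‖r n‖ * ‖E n * c * E n - c‖ * ‖r n‖ := by rw [norm_star]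
        _ ≤ ‖r n‖ * (1/((m n:ℝ)+1)) * ‖r n‖ := by
            gcongr
            exact cfc_approx hc (m n)
        _ = ‖r n‖^2 * (1/((m n:ℝ)+1)) := by ring
    have hX2 : ‖s n * (F n * d * F n - d) * star (s n)‖
        ≤ ‖s n‖^2 * (1/((m n:ℝ)+1)) := by
      calc ‖s n * (F n * d * F n - d) * star (s n)‖
          ≤ ‖s n * (F n * d * F n - d)‖ * ‖star (s n)‖ := norm_mul_le _ _
        _ ≤ (‖s n‖ * ‖F n * d * F n - d‖) * ‖star (s n)‖ := by
            gcongr; exact norm_mul_le _ _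
        _ = ‖s n‖ * ‖F n * d * F n - d‖ * ‖s n‖ := by rw [norm_star]
        _ ≤ ‖s n‖ * (1/((m n:ℝ)+1)) * ‖s n‖ := by
            gcongr
            exact cfc_approx hd (m n)
        _ = ‖s n‖^2 * (1/((m n:ℝ)+1)) := by ring
    calc ‖(r n * (E n * c * E n - c) * star (r n) + s n * (F n * d * F n - d) * star (s n))
          + ((r n * c * star (r n) - a) + (s n * d * star (s n) - b))‖
        ≤ ‖r n * (E n * c * E n - c) * star (r n) + s n * (F n * d * F n - d) * star (s n)‖
          + ‖(r n * c * star (r n) - a) + (s n * d * star (s n) - b)‖ := norm_add_le _ _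
      _ ≤ (‖r n * (E n * c * E n - c) * star (r n)‖ + ‖s n * (F n * d * F n - d) * star (s n)‖)
          + (‖r n * c * star (r n) - a‖ + ‖s n * d * star (s n) - b‖) := by
            gcongr <;> exact norm_add_le _ _
      _ ≤ (‖r n‖^2 * (1/((m n:ℝ)+1)) + ‖s n‖^2 * (1/((m n:ℝ)+1)))
          + (‖r n * c * star (r n) - a‖ + ‖s n * d * star (s n) - b‖) := by
            gcongr
      _ ≤ 1/((n:ℝ)+1) + ‖r n * c * star (r n) - a‖ + ‖s n * d * star (s n) - b‖ := by
            have := (hm n).le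
            nlinarith [norm_nonneg (r n * c * star (r n) - a),
              norm_nonneg (s n * d * star (s n) - b)]
  have hu : Tendsto (fun n : ℕ => 1/((n:ℝ)+1) + ‖r n * c * star (r n) - a‖
      + ‖s n * d * star (s n) - b‖) atTop (nhds 0) := by
    have := (tendsto_one_div_add_atTop_nhds_zero_nat.add hr).add hs
    simpa using this
  exact squeeze_zero (fun n => norm_nonneg _) hbound hu
end
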